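/- The fixed-point potential Q(x) = ((d_c−1)/n_c − x/v)·π(d_c−1, n_c x) − ((d_c−1)/n_c)·Po[n_c x](d_c−1) satisfies Q(0) = 0, and its second derivative equals Po[n_c x](d_c−2) · [ (1 − 2/v)n_c + (1 − 1/v)(d_c−2)n_c − (1 − 1/v)n_c² x ], so Q has a unique inflection point at x' = (1/n_c)(d_c − 1 − 1/(v−1)), being convex on [0,x'] and concave thereafter (for v ≥ 2). -/

import Mathlib

/-- The Poisson probability mass function `Po[μ](k)`. -/
noncomputable def poissonPMF (μ : ℝ) (k : ℕ) : ℝ :=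
  Real.exp (-μ) * μ ^ k / (k.factorial : ℝ)

/-- The Poisson upper tail `π(a,x) = Σ_{i ≥ a} Po[x](i)`. -/
noncomputable def poissonTail (a : ℕ) (x : ℝ) : ℝ :=
  ∑' i : ℕ, (if a ≤ i then poissonPMF x i else 0)

/-- The fixed-point potential of the spatially-coupled split-component ensemble. -/
noncomputable def fixedPointPotential (nc dc v : ℕ) (x : ℝ) : ℝ :=
  (((dc : ℝ) - 1) / nc - x / v) * poissonTail (dc - 1) ((nc : ℝ) * x)
    - (((dc : ℝ) - 1) / nc) * poissonPMF ((nc : ℝ) * x) (dc - 1)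

lemma poissonPMF_eq (x : ℝ) :
    poissonPMF x = fun i => Real.exp (-x) * (x ^ i / (i.factorial : ℝ)) := by
  funext i; simp [poissonPMF, mul_div_assoc]

lemma poissonPMF_summable (x : ℝ) : Summable (poissonPMF x) := by
  rw [poissonPMF_eq]
  exact (Real.summable_pow_div_factorial x).mul_left (Real.exp (-x))

lemma poissonPMF_tsum (x : ℝ) : ∑' i, poissonPMF x i = 1 := by
  rw [poissonPMF_eq, tsum_mul_left]
  have h : ∑' i : ℕ, x ^ i / (i.factorial : ℝ) = Real.exp x := by
    rw [Real.exp_eq_exp_ℝ, NormedSpace.exp_eq_tsum_div]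
  rw [h, ← Real.exp_add]; simp

lemma poissonPMF_nonneg {μ : ℝ} (h : 0 ≤ μ) (k : ℕ) : 0 ≤ poissonPMF μ k := by
  unfold poissonPMF
  positivity

lemma poissonTail_eq (a : ℕ) (x : ℝ) :
    poissonTail a x = 1 - ∑ i ∈ Finset.range a, poissonPMF x i := by
  unfold poissonTail
  have h1 : ∀ i, (if a ≤ i then poissonPMF x i else 0)
      = poissonPMF x i - (if i < a then poissonPMF x i else 0) := by
    intro i
    by_cases h : a ≤ i
    · simp [h, Nat.not_lt.2 h]
    · simp [h, Nat.lt_of_not_le h]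
  have hs2 : Summable (fun i => if i < a then poissonPMF x i else 0) :=
    summable_of_ne_finset_zero (s := Finset.range a) (by
      intro i hi
      simp only [Finset.mem_range] at hi
      simp [hi])
  simp_rw [h1]
  rw [Summable.tsum_sub (poissonPMF_summable x) hs2, poissonPMF_tsum,
    tsum_eq_sum (s := Finset.range a) (by
      intro i hi
      simp only [Finset.mem_range] at hi
      simp [hi])]
  congr 1
  exact Finset.sum_congr rfl (by intro i hi; simp [Finset.mem_range.1 hi])

lemma hasDerivAt_P0 (c x : ℝ) :
    HasDerivAt (fun y => poissonPMF (c * y) 0) (-(c * poissonPMF (c * x) 0)) x := by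
  have h1 : HasDerivAt (fun y : ℝ => -(c * y)) (-c) x := by
    exact ((hasDerivAt_id x).const_mul c).neg.congr_deriv (by ring)
  have h2 := h1.exp
  have h3 : HasDerivAt (fun y => poissonPMF (c * y) 0) (Real.exp (-(c * x)) * -c) x := by
    simpa [poissonPMF] using h2
  convert h3 using 1
  simp [poissonPMF]; ring

lemma hasDerivAt_PS (c x : ℝ) (k : ℕ) :
    HasDerivAt (fun y => poissonPMF (c * y) (k + 1))
      (c * (poissonPMF (c * x) k - poissonPMF (c * x) (k + 1))) x := by
  have h1 : HasDerivAt (fun y : ℝ => -(c * y)) (-c) x := by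
    exact ((hasDerivAt_id x).const_mul c).neg.congr_deriv (by ring)
  have h2 := h1.exp
  have h3 : HasDerivAt (fun y : ℝ => c * y) c x := by
    simpa using (hasDerivAt_id x).const_mul c
  have h4 := h3.pow (k + 1)
  have h5 := (h2.mul h4).div_const (((k + 1).factorial : ℝ))
  have h6 : HasDerivAt (fun y => poissonPMF (c * y) (k + 1))
      ((Real.exp (-(c * x)) * -c * (c * x) ^ (k + 1)
        + Real.exp (-(c * x)) * (↑(k + 1) * (c * x) ^ (k + 1 - 1) * c))
        / ((k + 1).factorial : ℝ)) x := by
    simpa [poissonPMF] using h5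
  convert h6 using 1
  have hf : ((k + 1).factorial : ℝ) = (k + 1) * (k.factorial : ℝ) := by
    rw [Nat.factorial_succ]; push_cast; ring
  have hk : (k.factorial : ℝ) ≠ 0 := Nat.cast_ne_zero.2 (Nat.factorial_ne_zero k)
  simp only [poissonPMF, hf, Nat.add_sub_cancel]
  push_cast
  field_simp
  ring

lemma hasDerivAt_Psum (c x : ℝ) (m : ℕ) :
    HasDerivAt (fun y => ∑ i ∈ Finset.range (m + 1), poissonPMF (c * y) i)
      (-(c * poissonPMF (c * x) m)) x := by
  induction m with
  | zero => simpa using hasDerivAt_P0 c x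
  | succ k ih =>
      have h := ih.add (hasDerivAt_PS c x k)
      have h2 : HasDerivAt (fun y => (∑ i ∈ Finset.range (k + 1), poissonPMF (c * y) i)
          + poissonPMF (c * y) (k + 1))
          (-(c * poissonPMF (c * x) (k + 1))) x := by
        refine h.congr_deriv ?_; ring
      convert h2 using 2 with y
      rw [Finset.sum_range_succ]

lemma poissonPMF_key (c x : ℝ) (m : ℕ) :
    ((m : ℝ) + 1) * poissonPMF (c * x) (m + 1) = c * x * poissonPMF (c * x) m := by
  have hk : (m.factorial : ℝ) ≠ 0 := Nat.cast_ne_zero.2 (Nat.factorial_ne_zero m)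
  have hf : ((m + 1).factorial : ℝ) = ((m : ℝ) + 1) * (m.factorial : ℝ) := by
    rw [Nat.factorial_succ]; push_cast; ring
  simp only [poissonPMF, hf]
  field_simp
  ring

/-- Closed form of the potential avoiding the infinite tail sum. -/
noncomputable def Qaux (c : ℝ) (m v : ℕ) (x : ℝ) : ℝ :=
  (((m : ℝ) + 1) / c - x / v) * (1 - ∑ i ∈ Finset.range (m + 1), poissonPMF (c * x) i)
    - (((m : ℝ) + 1) / c) * poissonPMF (c * x) (m + 1)

/-- First derivative of `Qaux`. -/
noncomputable def gaux (c : ℝ) (m v : ℕ) (x : ℝ) : ℝ :=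
  -(1 / v) * (1 - ∑ i ∈ Finset.range (m + 1), poissonPMF (c * x) i)
    + (1 - 1 / (v : ℝ)) * c * (x * poissonPMF (c * x) m)

/-- Second derivative of `Qaux`. -/
noncomputable def haux (c : ℝ) (m v : ℕ) (x : ℝ) : ℝ :=
  poissonPMF (c * x) m *
    ((1 - 2 / (v : ℝ)) * c + (1 - 1 / (v : ℝ)) * (m : ℝ) * c - (1 - 1 / (v : ℝ)) * c ^ 2 * x)

lemma hasDerivAt_Qaux (c : ℝ) (hc : c ≠ 0) (m v : ℕ) (x : ℝ) :
    HasDerivAt (Qaux c m v) (gaux c m v x) x := by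
  set P : ℕ → ℝ := poissonPMF (c * x)
  set S : ℝ := ∑ i ∈ Finset.range (m + 1), P i
  have hT : HasDerivAt (fun y => 1 - ∑ i ∈ Finset.range (m + 1), poissonPMF (c * y) i)
      (c * P m) x := by
    simpa using (hasDerivAt_Psum c x m).const_sub 1
  have hA : HasDerivAt (fun y : ℝ => ((m : ℝ) + 1) / c - y / v) (-(1 / v)) x := by
    simpa using ((hasDerivAt_id x).div_const (v : ℝ)).const_sub (((m : ℝ) + 1) / c)
  have h := (hA.mul hT).sub ((hasDerivAt_PS c x m).const_mul (((m : ℝ) + 1) / c))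
  refine h.congr_deriv (Eq.symm ?_)
  have hkey := poissonPMF_key c x m
  show _ = -(1 / v) * (1 - S) + (((m : ℝ) + 1) / c - x / v) * (c * P m)
      - ((m : ℝ) + 1) / c * (c * (P m - P (m + 1)))
  unfold gaux
  show -(1 / v) * (1 - S) + (1 - 1 / (v : ℝ)) * c * (x * P m) = _
  have hk2 : ((m : ℝ) + 1) * P (m + 1) = c * x * P m := hkey
  have hk3 : c * (((m : ℝ) + 1) * P (m + 1)) = c * (c * x * P m) := by rw [hk2]
  field_simp
  ring_nf
  ring_nf at hk3
  ring_nf at hk2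
  linarith [hk3, hk2]

lemma hasDerivAt_gaux (c : ℝ) (m v : ℕ) (x : ℝ) :
    HasDerivAt (gaux c m v) (haux c m v x) x := by
  have h1 : HasDerivAt
      (fun y => -(1 / (v:ℝ)) * (1 - ∑ i ∈ Finset.range (m + 1), poissonPMF (c * y) i))
      (-(1 / (v:ℝ)) * (c * poissonPMF (c * x) m)) x := by
    have := ((hasDerivAt_Psum c x m).const_sub 1).const_mul (-(1 / (v:ℝ)))
    refine this.congr_deriv ?_; ring
  cases m with
  | zero =>
      have h2 := ((hasDerivAt_id x).mul (hasDerivAt_P0 c x)).const_mul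
        ((1 - 1 / (v : ℝ)) * c)
      have h := h1.add h2
      refine h.congr_deriv (Eq.symm ?_)
      unfold haux
      push_cast
      simp only [id_eq]
      ring
  | succ k =>
      have h2 := ((hasDerivAt_id x).mul (hasDerivAt_PS c x k)).const_mul
        ((1 - 1 / (v : ℝ)) * c)
      have h := h1.add h2
      refine h.congr_deriv (Eq.symm ?_)
      unfold haux
      have hk2 : ((k : ℝ) + 1) * poissonPMF (c * x) (k + 1) = c * x * poissonPMF (c * x) k :=
        poissonPMF_key c x k
      push_cast
      simp only [id_eq]
      linear_combination (1 - 1 / (v : ℝ)) * c * hk2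

/-- `Q(0)=0`; the second derivative of `Q` equals
`Po[n_c x](d_c−2)·[(1−2/v)n_c + (1−1/v)(d_c−2)n_c − (1−1/v)n_c² x]`; hence `Q` has a unique
inflection point at `x' = (1/n_c)(d_c−1−1/(v−1))`, being convex on `[0,x']` and concave
thereafter (for `v ≥ 2`). -/
theorem fixed_point_potential_shape (nc dc v : ℕ) (hd : 2 ≤ dc) (hdn : dc ≤ nc)
    (hv : 2 ≤ v) :
    fixedPointPotential nc dc v 0 = 0 ∧
    (∀ x : ℝ, 0 < x →
      deriv (deriv (fixedPointPotential nc dc v)) x =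
        poissonPMF ((nc : ℝ) * x) (dc - 2) *
          ((1 - 2 / (v : ℝ)) * nc + (1 - 1 / (v : ℝ)) * ((dc : ℝ) - 2) * nc
            - (1 - 1 / (v : ℝ)) * (nc : ℝ) ^ 2 * x)) ∧
    ConvexOn ℝ (Set.Icc 0 ((1 / (nc : ℝ)) * ((dc : ℝ) - 1 - 1 / ((v : ℝ) - 1))))
      (fixedPointPotential nc dc v) ∧
    ConcaveOn ℝ (Set.Ici ((1 / (nc : ℝ)) * ((dc : ℝ) - 1 - 1 / ((v : ℝ) - 1))))
      (fixedPointPotential nc dc v) := by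
  set c : ℝ := (nc : ℝ) with hcdef
  set m : ℕ := dc - 2 with hmdef
  have hnc2 : 2 ≤ nc := le_trans hd hdn
  have hcpos : (0 : ℝ) < c := by
    simp only [hcdef]; exact_mod_cast lt_of_lt_of_le (by norm_num) hnc2
  have hc : c ≠ 0 := ne_of_gt hcpos
  have hvR : (2 : ℝ) ≤ (v : ℝ) := by exact_mod_cast hv
  have hv0 : (v : ℝ) ≠ 0 := by positivity
  have hv1 : (v : ℝ) - 1 ≠ 0 := by linarith
  have hmcast : ((m : ℝ)) = (dc : ℝ) - 2 := by
    simp only [hmdef]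
    rw [Nat.cast_sub hd]; norm_num
  have hdc : (dc : ℝ) - 1 = (m : ℝ) + 1 := by rw [hmcast]; ring
  have hm1 : dc - 1 = m + 1 := by omega
  -- closed form
  have hQeq : fixedPointPotential nc dc v = Qaux c m v := by
    funext x
    unfold fixedPointPotential Qaux
    rw [poissonTail_eq, hm1, hdc]
  -- x'
  set x' : ℝ := (1 / (nc : ℝ)) * ((dc : ℝ) - 1 - 1 / ((v : ℝ) - 1)) with hx'def
  have hx'nonneg : 0 ≤ x' := by
    have h1 : 1 / ((v : ℝ) - 1) ≤ 1 := by
      rw [div_le_one (by linarith)]; linarith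
    have h2 : (2 : ℝ) ≤ (dc : ℝ) := by exact_mod_cast hd
    have : (0 : ℝ) ≤ (dc : ℝ) - 1 - 1 / ((v : ℝ) - 1) := by linarith
    exact mul_nonneg (by positivity) this
  -- factorization of the bracket
  have hbracket : ∀ x : ℝ,
      (1 - 2 / (v : ℝ)) * c + (1 - 1 / (v : ℝ)) * (m : ℝ) * c - (1 - 1 / (v : ℝ)) * c ^ 2 * x
        = (1 - 1 / (v : ℝ)) * c ^ 2 * (x' - x) := by
    intro x
    rw [hx'def, hmcast, hcdef]
    field_simp
    ring
  -- derivatives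
  have hderiv1 : deriv (Qaux c m v) = gaux c m v := by
    funext y; exact (hasDerivAt_Qaux c hc m v y).deriv
  have hderiv2 : ∀ y : ℝ, deriv (deriv (Qaux c m v)) y = haux c m v y := by
    intro y
    rw [hderiv1]
    exact (hasDerivAt_gaux c m v y).deriv
  have hdiff1 : Differentiable ℝ (Qaux c m v) :=
    fun y => (hasDerivAt_Qaux c hc m v y).differentiableAt
  have hdiff2 : Differentiable ℝ (deriv (Qaux c m v)) := by
    rw [hderiv1]
    exact fun y => (hasDerivAt_gaux c m v y).differentiableAt
  have h1v : 0 ≤ 1 - 1 / (v : ℝ) := by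
    have : 1 / (v : ℝ) ≤ 1 := by rw [div_le_one (by linarith)]; linarith
    linarith
  refine ⟨?_, ?_, ?_, ?_⟩
  · -- Q(0) = 0
    rw [hQeq]
    unfold Qaux
    have hp : ∀ i : ℕ, poissonPMF (c * 0) i = if i = 0 then 1 else 0 := by
      intro i
      cases i with
      | zero => simp [poissonPMF]
      | succ k => simp [poissonPMF]
    have hsum : ∑ i ∈ Finset.range (m + 1), poissonPMF (c * 0) i = 1 := by
      simp_rw [hp]
      rw [Finset.sum_ite_eq' (Finset.range (m + 1)) 0 (fun _ => (1 : ℝ))]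
      simp
    rw [hsum, hp (m + 1)]
    simp
  · -- second derivative formula
    intro x _
    rw [hQeq, hderiv2 x]
    unfold haux
    rw [hmcast]
  · -- convexity
    rw [hQeq]
    apply convexOn_of_deriv2_nonneg (convex_Icc _ _) hdiff1.continuous.continuousOn
      hdiff1.differentiableOn hdiff2.differentiableOn
    intro x hx
    rw [interior_Icc, Set.mem_Ioo] at hx
    have h2 : deriv^[2] (Qaux c m v) x = haux c m v x := by
      show deriv (deriv (Qaux c m v)) x = _
      exact hderiv2 x
    rw [h2]
    unfold haux
    rw [hbracket x]
    have hP : 0 ≤ poissonPMF (c * x) m :=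
      poissonPMF_nonneg (mul_nonneg hcpos.le hx.1.le) m
    have : 0 ≤ x' - x := by linarith [hx.2]
    positivity
  · -- concavity
    rw [hQeq]
    apply concaveOn_of_deriv2_nonpos (convex_Ici _) hdiff1.continuous.continuousOn
      hdiff1.differentiableOn hdiff2.differentiableOn
    intro x hx
    rw [interior_Ici, Set.mem_Ioi] at hx
    have h2 : deriv^[2] (Qaux c m v) x = haux c m v x := by
      show deriv (deriv (Qaux c m v)) x = _
      exact hderiv2 x
    rw [h2]
    unfold haux
    rw [hbracket x]
    have hxpos : 0 < x := lt_of_le_of_lt hx'nonneg hx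
    have hP : 0 ≤ poissonPMF (c * x) m :=
      poissonPMF_nonneg (mul_nonneg hcpos.le hxpos.le) m
    have hneg : x' - x ≤ 0 := by linarith
    have := mul_nonneg (mul_nonneg h1v (sq_nonneg c)) hP
    nlinarith [mul_nonneg (mul_nonneg h1v (sq_nonneg c)) hP]
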